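/- Let f : ℝ^m → ℝ be a nonnegative continuously differentiable function with f(θ*) = 0 at some point θ*, and suppose f is L-smooth on an open neighborhood U of θ* (i.e. ‖∇f(θ₁) − ∇f(θ₂)‖₂ ≤ L‖θ₁ − θ₂‖₂ for all θ₁, θ₂ ∈ U). Suppose there exist an open set V ⊆ U containing θ* and a constant μ > 0 such that the Polyak–Łojasiewicz inequality ‖∇f(θ)‖₂² ≥ 2μ f(θ) holds for all θ ∈ V. Then for every step size 0 < α ≤ 1/L with αμ ≤ 1 there exists an open neighborhood U_α ⊆ V of θ* such that for any initial point θ₀ ∈ U_α, the gradient descent iterates θ_{t+1} = θ_t − α∇f(θ_t) remain in V for all t ≥ 0 and satisfy f(θ_t) ≤ (1 − αμ)^t f(θ₀) for all t ≥ 0; in particular f(θ_t) → 0 at a linear rate. -/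

import Mathlib

open Set

private lemma gd_aux_hasDerivAt {m : ℕ} {f : EuclideanSpace ℝ (Fin m) → ℝ}
    (hf : ContDiff ℝ 1 f) (x v : EuclideanSpace ℝ (Fin m)) (t : ℝ) :
    HasDerivAt (fun s : ℝ => f (x + s • v))
      (inner ℝ (gradient f (x + t • v)) v : ℝ) t := by
  have hd : HasFDerivAt f (fderiv ℝ f (x + t • v)) (x + t • v) :=
    (hf.differentiable one_ne_zero (x + t • v)).hasFDerivAt
  have hl : HasDerivAt (fun s : ℝ => x + s • v) v t := by
    simpa using ((hasDerivAt_id t).smul_const v).const_add x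
  have h := hd.comp_hasDerivAt t hl
  refine h.congr_deriv ?_
  rw [gradient]
  exact InnerProductSpace.toDual_symm_apply.symm

private lemma gd_aux_descent {m : ℕ} {f : EuclideanSpace ℝ (Fin m) → ℝ} {L : ℝ}
    {U : Set (EuclideanSpace ℝ (Fin m))}
    (hf : ContDiff ℝ 1 f)
    (hLip : ∀ θ₁ ∈ U, ∀ θ₂ ∈ U, ‖gradient f θ₁ - gradient f θ₂‖ ≤ L * ‖θ₁ - θ₂‖)
    (x v : EuclideanSpace ℝ (Fin m))
    (hseg : ∀ t ∈ Icc (0:ℝ) 1, x + t • v ∈ U) :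
    f (x + v) ≤ f x + inner ℝ (gradient f x) v + L / 2 * ‖v‖ ^ 2 := by
  set c : ℝ := (inner ℝ (gradient f x) v : ℝ) with hc
  set ψ : ℝ → ℝ := fun t => f (x + t • v) - t * c - L * t ^ 2 / 2 * ‖v‖ ^ 2 with hψ
  have hder : ∀ t : ℝ, HasDerivAt ψ
      ((inner ℝ (gradient f (x + t • v)) v : ℝ) - c - L * t * ‖v‖ ^ 2) t := by
    intro t
    have h1 := gd_aux_hasDerivAt hf x v t
    have h2 : HasDerivAt (fun s : ℝ => s * c) c t := by
      simpa using (hasDerivAt_id t).mul_const c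
    have h3 : HasDerivAt (fun s : ℝ => L * s ^ 2 / 2 * ‖v‖ ^ 2) (L * t * ‖v‖ ^ 2) t := by
      have h4 : HasDerivAt (fun s : ℝ => s ^ 2) (2 * t) t := by
        simpa using hasDerivAt_pow 2 t
      have h5 := ((h4.const_mul L).div_const 2).mul_const (‖v‖ ^ 2)
      refine h5.congr_deriv ?_
      ring
    exact (h1.sub h2).sub h3
  have anti : AntitoneOn ψ (Icc 0 1) := by
    apply antitoneOn_of_deriv_nonpos (convex_Icc 0 1)
    · exact fun t _ => (hder t).continuousAt.continuousWithinAt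
    · exact fun t _ => (hder t).differentiableAt.differentiableWithinAt
    · intro t ht
      rw [interior_Icc] at ht
      rw [(hder t).deriv]
      have hx : x ∈ U := by simpa using hseg 0 ⟨le_rfl, zero_le_one⟩
      have hxt : x + t • v ∈ U := hseg t ⟨ht.1.le, ht.2.le⟩
      have hcs : (inner ℝ (gradient f (x + t • v)) v : ℝ) - c
          ≤ ‖gradient f (x + t • v) - gradient f x‖ * ‖v‖ := by
        rw [hc, ← inner_sub_left]
        exact real_inner_le_norm _ _
      have hlip := hLip _ hxt _ hx
      have hnn : ‖(x + t • v) - x‖ = t * ‖v‖ := by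
        simp [norm_smul, abs_of_nonneg ht.1.le]
      rw [hnn] at hlip
      nlinarith [norm_nonneg v, norm_nonneg (gradient f (x + t • v) - gradient f x)]
  have h01 := anti (left_mem_Icc.2 zero_le_one) (right_mem_Icc.2 zero_le_one) zero_le_one
  have e0 : ψ 0 = f x := by simp [hψ]
  have e1 : ψ 1 = f (x + v) - c - L / 2 * ‖v‖ ^ 2 := by
    simp [hψ]
  rw [e0, e1] at h01
  linarith

private lemma gd_aux_step {m : ℕ} {f : EuclideanSpace ℝ (Fin m) → ℝ} {L α : ℝ}
    {U : Set (EuclideanSpace ℝ (Fin m))}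
    (hf : ContDiff ℝ 1 f)
    (hLip : ∀ θ₁ ∈ U, ∀ θ₂ ∈ U, ‖gradient f θ₁ - gradient f θ₂‖ ≤ L * ‖θ₁ - θ₂‖)
    (x : EuclideanSpace ℝ (Fin m)) (hα : 0 < α) (hαL : α * L ≤ 1)
    (hseg : ∀ t ∈ Icc (0:ℝ) 1, x + t • (-(α • gradient f x)) ∈ U) :
    f (x - α • gradient f x) ≤ f x - α / 2 * ‖gradient f x‖ ^ 2 := by
  set g := gradient f x with hg
  have hd := gd_aux_descent hf hLip x (-(α • g)) hseg
  have e1 : x + -(α • g) = x - α • g := by abel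
  have e2 : (inner ℝ g (-(α • g)) : ℝ) = -(α * ‖g‖ ^ 2) := by
    rw [inner_neg_right, real_inner_smul_right, real_inner_self_eq_norm_sq]
  have e3 : ‖-(α • g)‖ ^ 2 = α ^ 2 * ‖g‖ ^ 2 := by
    rw [norm_neg, norm_smul, Real.norm_eq_abs, abs_of_pos hα, mul_pow]
  rw [e1, e2, e3] at hd
  nlinarith [sq_nonneg ‖g‖, sq_nonneg α, mul_nonneg (sq_nonneg ‖g‖) hα.le]

set_option maxHeartbeats 1000000 in
/-- **Local linear convergence of gradient descent near a regular equilibrium.**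
If `f : ℝ^m → ℝ` is a nonnegative `C¹` function vanishing at `θ*`, is `L`-smooth on an
open neighborhood `U` of `θ*`, and satisfies the Polyak–Łojasiewicz inequality
`‖∇f(θ)‖² ≥ 2 μ f(θ)` on an open set `V ⊆ U` containing `θ*`, then for every step size
`0 < α ≤ 1/L` with `α μ ≤ 1` there is an open neighborhood `U_α ⊆ V` of `θ*` such that all
gradient descent trajectories started in `U_α` stay in `V` and satisfy
`f(θ_t) ≤ (1 - α μ)^t f(θ₀)`. -/
theorem gd_local_linear_convergence
    (m : ℕ) (f : EuclideanSpace ℝ (Fin m) → ℝ) (θstar : EuclideanSpace ℝ (Fin m))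
    (L μ : ℝ) (U V : Set (EuclideanSpace ℝ (Fin m)))
    (hf_smooth : ContDiff ℝ 1 f)
    (hf_nonneg : ∀ θ, 0 ≤ f θ)
    (hf_zero : f θstar = 0)
    (hU_open : IsOpen U) (hθU : θstar ∈ U)
    (hL : 0 < L)
    (hLip : ∀ θ₁ ∈ U, ∀ θ₂ ∈ U, ‖gradient f θ₁ - gradient f θ₂‖ ≤ L * ‖θ₁ - θ₂‖)
    (hV_open : IsOpen V) (hVU : V ⊆ U) (hθV : θstar ∈ V)
    (hμ : 0 < μ)
    (hPL : ∀ θ ∈ V, ‖gradient f θ‖ ^ 2 ≥ 2 * μ * f θ)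
    (α : ℝ) (hα_pos : 0 < α) (hα_le : α ≤ 1 / L) (hαμ : α * μ ≤ 1) :
    ∃ Uα : Set (EuclideanSpace ℝ (Fin m)), IsOpen Uα ∧ Uα ⊆ V ∧ θstar ∈ Uα ∧
      ∀ θ : ℕ → EuclideanSpace ℝ (Fin m), θ 0 ∈ Uα →
        (∀ t : ℕ, θ (t + 1) = θ t - α • gradient f (θ t)) →
        (∀ t : ℕ, θ t ∈ V) ∧ (∀ t : ℕ, f (θ t) ≤ (1 - α * μ) ^ t * f (θ 0)) := by
  -- the gradient vanishes at the global minimum θstar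
  have hgrad0 : gradient f θstar = 0 := by
    have hmin : IsLocalMin f θstar :=
      Filter.Eventually.of_forall (fun x => by rw [hf_zero]; exact hf_nonneg x)
    rw [gradient, hmin.fderiv_eq_zero]
    simp
  -- a closed ball around θstar inside V
  obtain ⟨r, hr_pos, hr_sub⟩ := Metric.isOpen_iff.1 hV_open θstar hθV
  set R := r / 2 with hR
  have hR_pos : 0 < R := by positivity
  have hRV : Metric.closedBall θstar R ⊆ V :=
    (Metric.closedBall_subset_ball (by rw [hR]; linarith)).trans hr_sub
  have hmemV : ∀ z : EuclideanSpace ℝ (Fin m), ‖z - θstar‖ ≤ R → z ∈ V := fun z hz =>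
    hRV (Metric.mem_closedBall.2 (by rw [dist_eq_norm]; exact hz))
  have hαμ_pos : 0 < α * μ := mul_pos hα_pos hμ
  have h1αμ_nonneg : (0:ℝ) ≤ 1 - α * μ := by linarith
  set q := Real.sqrt (1 - α * μ) with hq
  have hq_nonneg : 0 ≤ q := Real.sqrt_nonneg _
  have hq_sq : q ^ 2 = 1 - α * μ := Real.sq_sqrt h1αμ_nonneg
  have hq_lt1 : q < 1 := by nlinarith
  have hαL : α * L ≤ 1 := by rw [le_div_iff₀ hL] at hα_le; exact hα_le
  have hbase_pos : 0 < R / 4 * (1 - q) := by nlinarith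
  set ε := (R / 4 * (1 - q)) ^ 2 / (2 * α) with hε
  have hε_pos : 0 < ε := div_pos (pow_pos hbase_pos 2) (by linarith)
  refine ⟨Metric.ball θstar (R / 4) ∩ f ⁻¹' (Iio ε), ?_, ?_, ?_, ?_⟩
  · exact Metric.isOpen_ball.inter (isOpen_Iio.preimage hf_smooth.continuous)
  · intro z hz
    exact hmemV z (by
      have := Metric.mem_ball.1 hz.1
      rw [dist_eq_norm] at this
      linarith)
  · exact ⟨Metric.mem_ball_self (by linarith), by
      show f θstar < ε
      rw [hf_zero]; exact hε_pos⟩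
  · intro θ hθ0 hrec
    set f₀ := f (θ 0) with hf₀
    have hf₀_nonneg : 0 ≤ f₀ := hf_nonneg _
    have hf₀_lt : f₀ < ε := hθ0.2
    set S := Real.sqrt (2 * α * f₀) with hS
    have hS_nonneg : 0 ≤ S := Real.sqrt_nonneg _
    have hS_le : S ≤ R / 4 * (1 - q) := by
      rw [hS]
      have h2 : 2 * α * f₀ ≤ (R / 4 * (1 - q)) ^ 2 := by
        rw [hε, lt_div_iff₀ (by linarith : (0:ℝ) < 2 * α)] at hf₀_lt
        nlinarith
      calc Real.sqrt (2 * α * f₀) ≤ Real.sqrt ((R / 4 * (1 - q)) ^ 2) :=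
            Real.sqrt_le_sqrt h2
        _ = R / 4 * (1 - q) := Real.sqrt_sq hbase_pos.le
    have hsum_le : ∀ t : ℕ, ∑ s ∈ Finset.range t, q ^ s ≤ 1 / (1 - q) := by
      intro t
      rw [geom_sum_eq hq_lt1.ne t]
      have h1 : (q ^ t - 1) / (q - 1) = (1 - q ^ t) / (1 - q) := by
        rw [← neg_sub 1 (q ^ t), ← neg_sub 1 q, neg_div_neg_eq]
      rw [h1]
      have hqt : 0 ≤ q ^ t := pow_nonneg hq_nonneg t
      gcongr
      · linarith
    have hsum_bound : ∀ t : ℕ, S * ∑ s ∈ Finset.range t, q ^ s ≤ R / 4 := by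
      intro t
      have hsum_nonneg : 0 ≤ ∑ s ∈ Finset.range t, q ^ s :=
        Finset.sum_nonneg fun s _ => pow_nonneg hq_nonneg s
      calc S * ∑ s ∈ Finset.range t, q ^ s
          ≤ (R / 4 * (1 - q)) * (1 / (1 - q)) :=
            mul_le_mul hS_le (hsum_le t) hsum_nonneg hbase_pos.le
        _ = R / 4 := by
            rw [mul_one_div, mul_div_assoc, div_self (by linarith : (1:ℝ) - q ≠ 0), mul_one]
    have key : ∀ t : ℕ, ‖θ t - θstar‖ ≤ R / 4 + S * ∑ s ∈ Finset.range t, q ^ s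
        ∧ f (θ t) ≤ (1 - α * μ) ^ t * f₀ := by
      intro t
      induction t with
      | zero =>
        refine ⟨?_, by simp [hf₀]⟩
        have h0 := hθ0.1
        rw [Metric.mem_ball, dist_eq_norm] at h0
        simpa using h0.le
      | succ t ih =>
        obtain ⟨ihn, ihf⟩ := ih
        have hnorm_t : ‖θ t - θstar‖ ≤ R / 2 := by
          have := hsum_bound t
          linarith
        have hθtV : θ t ∈ V := hmemV _ (by linarith)
        have hθtU : θ t ∈ U := hVU hθtV
        set g := gradient f (θ t) with hgdef
        have hg_norm : ‖g‖ ≤ L * ‖θ t - θstar‖ := by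
          have := hLip (θ t) hθtU θstar hθU
          rwa [hgrad0, sub_zero] at this
        have hαg_nonneg : 0 ≤ α * ‖g‖ := mul_nonneg hα_pos.le (norm_nonneg _)
        have hstep : α * ‖g‖ ≤ R / 2 := by
          calc α * ‖g‖ ≤ α * (L * ‖θ t - θstar‖) :=
                mul_le_mul_of_nonneg_left hg_norm hα_pos.le
            _ = (α * L) * ‖θ t - θstar‖ := by ring
            _ ≤ 1 * (R / 2) :=
                mul_le_mul hαL (by linarith) (norm_nonneg _) zero_le_one
            _ = R / 2 := one_mul _
        have hseg : ∀ s ∈ Icc (0:ℝ) 1, θ t + s • (-(α • g)) ∈ U := by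
          intro s hs
          apply hVU
          apply hmemV
          have e : θ t + s • (-(α • g)) - θstar = (θ t - θstar) + s • (-(α • g)) := by abel
          rw [e]
          have hns : ‖s • (-(α • g))‖ = s * (α * ‖g‖) := by
            rw [norm_smul, norm_neg, norm_smul, Real.norm_eq_abs, Real.norm_eq_abs,
              abs_of_nonneg hs.1, abs_of_pos hα_pos]
          have hs1 : s * (α * ‖g‖) ≤ α * ‖g‖ := mul_le_of_le_one_left hαg_nonneg hs.2
          calc ‖(θ t - θstar) + s • (-(α • g))‖
              ≤ ‖θ t - θstar‖ + ‖s • (-(α • g))‖ := norm_add_le _ _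
            _ ≤ R / 2 + R / 2 := by rw [hns]; linarith
            _ = R := by ring
        have hstep_ineq := gd_aux_step hf_smooth hLip (θ t) hα_pos hαL hseg
        have hrecT := hrec t
        have hPLt := hPL (θ t) hθtV
        have hf_next : f (θ (t + 1)) ≤ (1 - α * μ) * f (θ t) := by
          rw [hrecT]
          have h7 : α / 2 * (2 * μ * f (θ t)) ≤ α / 2 * ‖g‖ ^ 2 :=
            mul_le_mul_of_nonneg_left hPLt.le (by positivity)
          have h8 : α / 2 * (2 * μ * f (θ t)) = α * μ * f (θ t) := by ring
          linarith
        have hf_succ : f (θ (t + 1)) ≤ (1 - α * μ) ^ (t + 1) * f₀ := by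
          calc f (θ (t + 1)) ≤ (1 - α * μ) * f (θ t) := hf_next
            _ ≤ (1 - α * μ) * ((1 - α * μ) ^ t * f₀) :=
                mul_le_mul_of_nonneg_left ihf h1αμ_nonneg
            _ = (1 - α * μ) ^ (t + 1) * f₀ := by ring
        have hgb : α * ‖g‖ ≤ S * q ^ t := by
          have h1 : α / 2 * ‖g‖ ^ 2 ≤ f (θ t) := by
            have h0 := hf_nonneg (θ (t + 1))
            rw [hrecT] at h0
            linarith
          have h2 : (α * ‖g‖) ^ 2 ≤ (S * q ^ t) ^ 2 := by
            have hSq : (S * q ^ t) ^ 2 = (2 * α * f₀) * (1 - α * μ) ^ t := by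
              rw [mul_pow, hS, Real.sq_sqrt (by positivity), ← pow_mul, mul_comm t 2,
                pow_mul, hq_sq]
            rw [hSq]
            have h4 := mul_le_mul_of_nonneg_left h1 (by linarith : (0:ℝ) ≤ 2 * α)
            have h5 := mul_le_mul_of_nonneg_left ihf (by linarith : (0:ℝ) ≤ 2 * α)
            nlinarith [h4, h5]
          exact le_of_pow_le_pow_left₀ two_ne_zero
            (mul_nonneg hS_nonneg (pow_nonneg hq_nonneg t)) h2
        have hnorm_succ : ‖θ (t + 1) - θstar‖
            ≤ R / 4 + S * ∑ s ∈ Finset.range (t + 1), q ^ s := by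
          have e : θ (t + 1) - θstar = (θ t - θstar) + (-(α • g)) := by
            rw [hrecT]; abel
          have hna : ‖-(α • g)‖ = α * ‖g‖ := by
            rw [norm_neg, norm_smul, Real.norm_eq_abs, abs_of_pos hα_pos]
          rw [e, Finset.sum_range_succ]
          calc ‖(θ t - θstar) + (-(α • g))‖
              ≤ ‖θ t - θstar‖ + ‖-(α • g)‖ := norm_add_le _ _
            _ ≤ (R / 4 + S * ∑ s ∈ Finset.range t, q ^ s) + S * q ^ t := by
                rw [hna]; linarith
            _ = R / 4 + S * (∑ s ∈ Finset.range t, q ^ s + q ^ t) := by ring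
        exact ⟨hnorm_succ, hf_succ⟩
    refine ⟨fun t => ?_, fun t => (key t).2⟩
    have h1 := (key t).1
    have h2 := hsum_bound t
    exact hmemV _ (by linarith)
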